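/- Let K be a convex body in ℝⁿ, let x ∈ int K, y ∈ ℝⁿ \ {0}, a ∈ ℝⁿ, and suppose the ellipse with parameters (a, b) through x in direction y is inscribed in K where b = b*_K(x,y) (i.e., it is a b-maximal ellipse for (x,y)). Then no translate of this ellipse lies entirely in the interior of K: for every v ∈ ℝⁿ there exists θ ∈ ℝ such that (cos θ)·a + b(sin θ)·y + (x − a) + v ∉ int K. -/

import Mathlib

/-- A convex body in ℝⁿ: a compact convex set with nonempty interior. -/
def IsConvexBody {n : ℕ} (K : Set (EuclideanSpace ℝ (Fin n))) : Prop :=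
  IsCompact K ∧ Convex ℝ K ∧ (interior K).Nonempty

/-- The ellipse with parameters `(a, b)` through `x` in direction `y`,
`θ ↦ (cos θ)•a + b(sin θ)•y + (x - a)`, is inscribed in `K`. -/
def InscribedEllipse {n : ℕ} (K : Set (EuclideanSpace ℝ (Fin n)))
    (x y a : EuclideanSpace ℝ (Fin n)) (b : ℝ) : Prop :=
  ∀ θ : ℝ, (Real.cos θ) • a + (b * Real.sin θ) • y + (x - a) ∈ K

/-- `b*_K(x,y)`: the supremum of `b > 0` such that some ellipse with parameters
`(a,b)` through `x` in direction `y` is inscribed in `K`. -/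
noncomputable def bStar {n : ℕ} (K : Set (EuclideanSpace ℝ (Fin n)))
    (x y : EuclideanSpace ℝ (Fin n)) : ℝ :=
  sSup { b : ℝ | 0 < b ∧ ∃ a, InscribedEllipse K x y a b }

private lemma exists_cos_sin (c s : ℝ) (h : c ^ 2 + s ^ 2 = 1) :
    ∃ θ : ℝ, Real.cos θ = c ∧ Real.sin θ = s := by
  have habs : ‖(⟨c, s⟩ : ℂ)‖ = 1 := by
    rw [Complex.norm_def, Complex.normSq_mk, show c * c + s * s = 1 by nlinarith]
    exact Real.sqrt_one
  have hz : (⟨c, s⟩ : ℂ) ≠ 0 := by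
    intro h0
    rw [h0] at habs; simp at habs
  refine ⟨Complex.arg ⟨c, s⟩, ?_, ?_⟩
  · rw [Complex.cos_arg hz, habs]; simp
  · rw [Complex.sin_arg, habs]; simp

set_option maxHeartbeats 4000000 in
/-- A b-maximal inscribed ellipse admits no translate lying entirely in the interior of K. -/
theorem stmt_0 {n : ℕ} (hn : 1 ≤ n) (K : Set (EuclideanSpace ℝ (Fin n)))
    (hK : IsConvexBody K) (x y a : EuclideanSpace ℝ (Fin n))
    (hx : x ∈ interior K) (hy : y ≠ 0)
    (hins : InscribedEllipse K x y a (bStar K x y)) :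
    ∀ v : EuclideanSpace ℝ (Fin n), ∃ θ : ℝ,
      (Real.cos θ) • a + (bStar K x y * Real.sin θ) • y + (x - a) + v ∉ interior K := by
  intro v
  by_contra hcon
  push_neg at hcon
  obtain ⟨hcomp, hconv, -⟩ := hK
  set b := bStar K x y with hbdef
  have hbsSup : b = sSup { b' : ℝ | 0 < b' ∧ ∃ a', InscribedEllipse K x y a' b' } := rfl
  obtain ⟨R, hR⟩ := hcomp.isBounded.subset_closedBall 0
  have hyn : (0:ℝ) < ‖y‖ := norm_pos_iff.mpr hy
  -- the admissible set is bounded above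
  have hbdd : BddAbove { b' : ℝ | 0 < b' ∧ ∃ a', InscribedEllipse K x y a' b' } := by
    refine ⟨R / ‖y‖, ?_⟩
    rintro b' ⟨hb', a', hins'⟩
    have h1 := hins' (Real.pi/2)
    have h2 := hins' (-(Real.pi/2))
    rw [Real.cos_pi_div_two, Real.sin_pi_div_two] at h1
    rw [Real.cos_neg, Real.sin_neg, Real.cos_pi_div_two, Real.sin_pi_div_two] at h2
    have hp1 : ‖(0:ℝ) • a' + (b' * 1) • y + (x - a')‖ ≤ R :=
      mem_closedBall_zero_iff.mp (hR h1)
    have hp2 : ‖(0:ℝ) • a' + (b' * -1) • y + (x - a')‖ ≤ R :=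
      mem_closedBall_zero_iff.mp (hR h2)
    have hkey : ‖(2*b') • y‖ ≤ 2*R := by
      have heq : (2*b') • y =
          ((0:ℝ) • a' + (b' * 1) • y + (x - a')) - ((0:ℝ) • a' + (b' * -1) • y + (x - a')) := by
        module
      rw [heq]
      calc ‖_ - _‖ ≤ _ + _ := norm_sub_le _ _
        _ ≤ 2*R := by linarith
    rw [norm_smul, Real.norm_eq_abs, abs_of_pos (by linarith : (0:ℝ) < 2*b')] at hkey
    rw [le_div_iff₀ hyn]
    nlinarith
  -- b is positive
  have hbpos : 0 < b := by
    obtain ⟨r, hr, hball⟩ := Metric.isOpen_iff.mp isOpen_interior x hx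
    have hb0pos : 0 < r / (2*‖y‖) := by positivity
    have hmem : r/(2*‖y‖) ∈ { b' : ℝ | 0 < b' ∧ ∃ a', InscribedEllipse K x y a' b' } := by
      refine ⟨hb0pos, 0, fun θ => ?_⟩
      have hpt : (Real.cos θ) • (0 : EuclideanSpace ℝ (Fin n))
          + (r/(2*‖y‖) * Real.sin θ) • y + (x - 0) ∈ Metric.ball x r := by
        rw [Metric.mem_ball, dist_eq_norm]
        have heq : (Real.cos θ) • (0 : EuclideanSpace ℝ (Fin n))
            + (r/(2*‖y‖) * Real.sin θ) • y + (x - 0) - x = (r/(2*‖y‖) * Real.sin θ) • y := by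
          module
        rw [heq, norm_smul, Real.norm_eq_abs, abs_mul, abs_of_pos hb0pos]
        have hsin : |Real.sin θ| ≤ 1 := Real.abs_sin_le_one θ
        have h2y : r/(2*‖y‖) * ‖y‖ = r/2 := by field_simp
        nlinarith [abs_nonneg (Real.sin θ)]
      exact interior_subset (hball hpt)
    calc (0:ℝ) < r/(2*‖y‖) := hb0pos
      _ ≤ b := by rw [hbsSup]; exact le_csSup hbdd hmem
  -- thickening of the translated ellipse
  have hΓc : IsCompact {p : ℝ×ℝ | p.1^2 + p.2^2 = 1} := by
    apply Metric.isCompact_of_isClosed_isBounded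
    · exact isClosed_eq (by fun_prop) continuous_const
    · refine (Metric.isBounded_closedBall (x := (0:ℝ×ℝ)) (r := 1)).subset ?_
      rintro ⟨p1, p2⟩ hp
      simp only [Set.mem_setOf_eq] at hp
      rw [Metric.mem_closedBall, dist_zero_right, Prod.norm_def]
      apply max_le <;> (rw [Real.norm_eq_abs, abs_le]; constructor <;> nlinarith)
  have hg : Continuous (fun p : ℝ×ℝ => p.1 • a + (b * p.2) • y + (x - a) + v) := by
    fun_prop
  have hSsub : (fun p : ℝ×ℝ => p.1 • a + (b * p.2) • y + (x - a) + v) ''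
      {p : ℝ×ℝ | p.1^2 + p.2^2 = 1} ⊆ interior K := by
    rintro _ ⟨p, hp, rfl⟩
    obtain ⟨θ, hθc, hθs⟩ := exists_cos_sin p.1 p.2 hp
    have := hcon θ
    rw [hθc, hθs] at this
    exact this
  obtain ⟨ε, hε, hthick⟩ :=
    (hΓc.image hg).exists_thickening_subset_open isOpen_interior hSsub
  have hball : ∀ c s : ℝ, c^2 + s^2 = 1 → ∀ w : EuclideanSpace ℝ (Fin n), ‖w‖ < ε →
      c • a + (b*s) • y + (x - a) + v + w ∈ interior K := by
    intro c s hcs w hw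
    apply hthick
    rw [Metric.mem_thickening_iff]
    refine ⟨c • a + (b*s) • y + (x - a) + v, ⟨(c, s), hcs, rfl⟩, ?_⟩
    rw [dist_eq_norm, add_sub_cancel_left]
    exact hw
  -- convex combination step
  have hcombo : ∀ c s : ℝ, c^2 + s^2 = 1 → ∀ t : ℝ, 0 < t → t ≤ 1 →
      ∀ w : EuclideanSpace ℝ (Fin n), ‖w‖ < ε →
      c • a + (b*s) • y + (x - a) + t • v + t • w ∈ interior K := by
    intro c s hcs t ht ht1 w hw
    obtain ⟨θ, hθc, hθs⟩ := exists_cos_sin c s hcs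
    have h1 : c • a + (b*s) • y + (x - a) ∈ closure K := by
      rw [hcomp.isClosed.closure_eq]
      have := hins θ
      rw [hθc, hθs] at this
      exact this
    have h2 := hball c s hcs w hw
    have hkey := hconv.combo_interior_closure_mem_interior h2 h1 ht
      (by linarith : (0:ℝ) ≤ 1 - t) (by ring)
    have heq : t • (c • a + (b*s) • y + (x - a) + v + w)
        + (1 - t) • (c • a + (b*s) • y + (x - a))
        = c • a + (b*s) • y + (x - a) + t • v + t • w := by module
    rw [heq] at hkey
    exact hkey
  -- the enlarged ellipse
  set C : ℝ := ‖a‖ + 2*(b*‖y‖) + 1 with hCdef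
  have hCpos : 0 < C := by positivity
  set δ : ℝ := min 1 (ε/(24*C)) with hδdef
  have hδpos : 0 < δ := lt_min one_pos (by positivity)
  have hδ1 : δ ≤ 1 := min_le_left _ _
  have hδε : δ ≤ ε/(24*C) := min_le_right _ _
  have hins' : InscribedEllipse K x y (a - (2:ℝ)⁻¹ • v) (b*(1+δ)) := by
    intro φ
    have hpyth : Real.cos φ ^ 2 + Real.sin φ ^ 2 = 1 := by
      rw [add_comm]; exact Real.sin_sq_add_cos_sq φ
    have hc1 : Real.cos φ ≤ 1 := Real.cos_le_one φ
    by_cases hco : Real.cos φ = 1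
    · have hs0 : Real.sin φ = 0 := by nlinarith
      rw [hco, hs0]
      have heq : (1:ℝ) • (a - (2:ℝ)⁻¹ • v) + (b*(1+δ) * 0) • y
          + (x - (a - (2:ℝ)⁻¹ • v)) = x := by module
      rw [heq]
      exact interior_subset hx
    · have hclt : Real.cos φ < 1 := lt_of_le_of_ne hc1 hco
      set cφ := Real.cos φ with hcφ
      set sφ := Real.sin φ with hsφ
      set t : ℝ := (1 - cφ)/2 with htdef
      have ht : 0 < t := by rw [htdef]; linarith
      have ht1 : t ≤ 1 := by
        have := Real.neg_one_le_cos φ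
        rw [htdef]; rw [← hcφ] at *; linarith
      set r : ℝ := Real.sqrt (cφ^2 + (1+δ)^2*sφ^2) with hrdef
      have hr2 : r^2 = cφ^2 + (1+δ)^2*sφ^2 := Real.sq_sqrt (by positivity)
      have hrnn : 0 ≤ r := by rw [hrdef]; exact Real.sqrt_nonneg _
      have hr2ge : 1 ≤ r^2 := by
        rw [hr2]
        nlinarith [hpyth, mul_nonneg hδpos.le (sq_nonneg sφ), mul_nonneg (mul_nonneg hδpos.le hδpos.le) (sq_nonneg sφ)]
      have hr1 : 1 ≤ r := by nlinarith [hrnn, hr2ge]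
      have hrpos : 0 < r := lt_of_lt_of_le one_pos hr1
      set c : ℝ := cφ/r with hcdef
      set s : ℝ := (1+δ)*sφ/r with hsdef
      have hcs : c^2 + s^2 = 1 := by
        rw [hcdef, hsdef]
        have : cφ^2/r^2 + ((1+δ)*sφ)^2/r^2 = (cφ^2 + (1+δ)^2*sφ^2)/r^2 := by ring
        rw [div_pow, div_pow, this, ← hr2, div_self (by positivity)]
      -- norm estimates
      have hcabs : |cφ| ≤ 1 := by rw [hcφ]; exact Real.abs_cos_le_one φ
      have hA : |cφ - c| ≤ r - 1 := by
        have heq : cφ - c = cφ*(r-1)/r := by rw [hcdef]; field_simp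
        rw [heq, abs_div, abs_mul, abs_of_pos hrpos, abs_of_nonneg (by linarith : (0:ℝ) ≤ r - 1),
          div_le_iff₀ hrpos]
        nlinarith [abs_nonneg cφ]
      have hsle : (1+δ)*|sφ| ≤ r := by
        have hsq : ((1+δ)*|sφ|)^2 ≤ r^2 := by
          rw [hr2, mul_pow, sq_abs]
          nlinarith [sq_nonneg cφ]
        nlinarith [abs_nonneg sφ, hδpos]
      have hB : |(1+δ)*sφ - s| ≤ r - 1 := by
        have heq : (1+δ)*sφ - s = (1+δ)*sφ*(r-1)/r := by rw [hsdef]; field_simp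
        rw [heq, abs_div, abs_mul, abs_mul, abs_of_pos hrpos,
          abs_of_nonneg (by linarith : (0:ℝ) ≤ r - 1),
          abs_of_pos (by linarith : (0:ℝ) < 1+δ), div_le_iff₀ hrpos]
        nlinarith [abs_nonneg sφ, hsle]
      have hcm1 : -1 ≤ cφ := by rw [hcφ]; exact Real.neg_one_le_cos φ
      have hs2t : sφ^2 ≤ 4*t := by
        rw [htdef]
        nlinarith [hpyth, hclt, hcm1]
      have hr12 : r - 1 ≤ 12*δ*t := by
        have h3 : r - 1 ≤ r^2 - 1 := by nlinarith
        rw [hr2] at h3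
        nlinarith [mul_le_mul_of_nonneg_left hs2t (by linarith : (0:ℝ) ≤ 3*δ)]
      set w : EuclideanSpace ℝ (Fin n) :=
        t⁻¹ • ((cφ - c) • a + (b*((1+δ)*sφ - s)) • y) with hwdef
      have hnorm : ‖(cφ - c) • a + (b*((1+δ)*sφ - s)) • y‖ ≤ 12*δ*t*C := by
        calc ‖(cφ - c) • a + (b*((1+δ)*sφ - s)) • y‖
            ≤ ‖(cφ - c) • a‖ + ‖(b*((1+δ)*sφ - s)) • y‖ := norm_add_le _ _
          _ = |cφ - c| * ‖a‖ + |b| * |(1+δ)*sφ - s| * ‖y‖ := by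
              rw [norm_smul, norm_smul, Real.norm_eq_abs, Real.norm_eq_abs, abs_mul]
          _ ≤ (r-1) * ‖a‖ + b * (r-1) * ‖y‖ := by
              rw [abs_of_pos hbpos]
              have h5 := mul_le_mul_of_nonneg_right hA (norm_nonneg a)
              have h6 := mul_le_mul_of_nonneg_right
                (mul_le_mul_of_nonneg_left hB hbpos.le) (norm_nonneg y)
              linarith
          _ = (r-1) * (‖a‖ + b * ‖y‖) := by ring
          _ ≤ (12*δ*t) * C := by
              have hab : ‖a‖ + b * ‖y‖ ≤ C := by
                rw [hCdef]
                nlinarith [hbpos, norm_nonneg y]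
              have hnn1 : (0:ℝ) ≤ ‖a‖ + b * ‖y‖ := by
                nlinarith [norm_nonneg a, norm_nonneg y, hbpos]
              have hnn2 : (0:ℝ) ≤ 12*δ*t := by nlinarith
              exact mul_le_mul hr12 hab hnn1 hnn2
          _ = 12*δ*t*C := by ring
      have hwb : ‖w‖ < ε := by
        rw [hwdef, norm_smul, Real.norm_eq_abs, abs_of_pos (inv_pos.mpr ht)]
        have h1 : t⁻¹ * ‖(cφ - c) • a + (b*((1+δ)*sφ - s)) • y‖ ≤ t⁻¹ * (12*δ*t*C) :=
          mul_le_mul_of_nonneg_left hnorm (by positivity)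
        have h2 : t⁻¹ * (12*δ*t*C) = 12*δ*C := by field_simp
        have h3 : 12*δ*C ≤ ε/2 := by
          have h4 := (le_div_iff₀ (by positivity : (0:ℝ) < 24*C)).mp hδε
          nlinarith
        linarith
      have hQ := hcombo c s hcs t ht ht1 w hwb
      have heq : c • a + (b*s) • y + (x - a) + t • v + t • w
          = cφ • (a - (2:ℝ)⁻¹ • v) + (b*(1+δ) * sφ) • y + (x - (a - (2:ℝ)⁻¹ • v)) := by
        rw [hwdef, smul_inv_smul₀ ht.ne', htdef]
        module
      rw [heq] at hQ
      exact interior_subset hQ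
  -- contradiction with maximality
  have hmem' : b*(1+δ) ∈ { b' : ℝ | 0 < b' ∧ ∃ a', InscribedEllipse K x y a' b' } :=
    ⟨by nlinarith, _, hins'⟩
  have hle : b*(1+δ) ≤ b := by rw [hbsSup]; exact le_csSup hbdd hmem'
  nlinarith
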